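/- Let G be a d-regular graph on n vertices, and let 1/2 ≤ ρ < 1 be such that every cut of G contains at most ρ·nd/2 edges. Then for every subset S of the vertices and every partition of S into two parts, the number of edges of G with both endpoints in S whose endpoints lie in different parts of the partition is at most ρ·(|S|+n)·d/4. -/

import Mathlib

/-- The number of edges of `G` that cross from `T` to its complement (inside all of `V`). -/
noncomputable def cutSize {V : Type*} (G : SimpleGraph V) (T : Set V) : ℕ :=
  {e ∈ G.edgeSet | ∃ a b, e = s(a, b) ∧ a ∈ T ∧ b ∉ T}.ncard

/-- The number of edges of `G` with both endpoints in `S` that cross the partition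
of `S` given by `T ⊆ S` (i.e. one endpoint in `T`, the other in `S \ T`). -/
noncomputable def cutSizeIn {V : Type*} (G : SimpleGraph V) (S T : Set V) : ℕ :=
  {e ∈ G.edgeSet | ∃ a b, e = s(a, b) ∧ a ∈ S ∧ b ∈ S ∧ a ∈ T ∧ b ∉ T}.ncard

set_option linter.unusedSectionVars false
set_option maxHeartbeats 2000000

open scoped Classical in
/-- Edges of `G` with one endpoint in `X` and the other in `Y` (as a `Finset`). -/
noncomputable def crs {V : Type*} [Fintype V] (G : SimpleGraph V) [DecidableRel G.Adj]
    (X Y : Set V) : Finset (Sym2 V) :=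
  G.edgeFinset.filter (fun e => ∃ a b, e = s(a, b) ∧ a ∈ X ∧ b ∈ Y)

section Lemmas

variable {V : Type*} [Fintype V] [DecidableEq V] (G : SimpleGraph V) [DecidableRel G.Adj]

lemma mem_crs {X Y : Set V} {e : Sym2 V} :
    e ∈ crs G X Y ↔ e ∈ G.edgeFinset ∧ ∃ a b, e = s(a, b) ∧ a ∈ X ∧ b ∈ Y := by
  classical
  simp [crs]

lemma crs_symm (X Y : Set V) : crs G X Y = crs G Y X := by
  ext e
  simp only [mem_crs]
  constructor <;> rintro ⟨he, a, b, rfl, ha, hb⟩ <;> exact ⟨he, b, a, Sym2.eq_swap, hb, ha⟩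

lemma crs_union_right {X Y₁ Y₂ : Set V} (hY : Disjoint Y₁ Y₂) (hXY : Disjoint X Y₂) :
    (crs G X (Y₁ ∪ Y₂)).card = (crs G X Y₁).card + (crs G X Y₂).card := by
  have hset : crs G X (Y₁ ∪ Y₂) = crs G X Y₁ ∪ crs G X Y₂ := by
    ext e
    simp only [Finset.mem_union, mem_crs]
    constructor
    · rintro ⟨he, a, b, rfl, ha, hb⟩
      rcases hb with hb | hb
      · exact Or.inl ⟨he, a, b, rfl, ha, hb⟩
      · exact Or.inr ⟨he, a, b, rfl, ha, hb⟩
    · rintro (⟨he, a, b, rfl, ha, hb⟩ | ⟨he, a, b, rfl, ha, hb⟩)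
      · exact ⟨he, a, b, rfl, ha, Or.inl hb⟩
      · exact ⟨he, a, b, rfl, ha, Or.inr hb⟩
  have hdisj : Disjoint (crs G X Y₁) (crs G X Y₂) := by
    rw [Finset.disjoint_left]
    intro e h1 h2
    obtain ⟨he, a, b, rfl, ha, hb⟩ := (mem_crs G).1 h1
    obtain ⟨he', a', b', heq, ha', hb'⟩ := (mem_crs G).1 h2
    rw [Sym2.eq_iff] at heq
    rcases heq with ⟨rfl, rfl⟩ | ⟨rfl, rfl⟩
    · exact hY.ne_of_mem hb hb' rfl
    · exact hXY.ne_of_mem ha hb' rfl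
  rw [hset, Finset.card_union_of_disjoint hdisj]

lemma crs_union_left {X₁ X₂ Y : Set V} (hX : Disjoint X₁ X₂) (hXY : Disjoint Y X₂) :
    (crs G (X₁ ∪ X₂) Y).card = (crs G X₁ Y).card + (crs G X₂ Y).card := by
  rw [crs_symm, crs_union_right G hX hXY, crs_symm G Y X₁, crs_symm G Y X₂]

open scoped Classical in
lemma degree_sum_split {d : ℕ} (hreg : G.IsRegularOfDegree d) (C : Set V) :
    d * C.ncard = 2 * (crs G C C).card + (crs G C Cᶜ).card := by
  classical
  set D : Finset (V × V) := Finset.univ.filter (fun p : V × V => G.Adj p.1 p.2 ∧ p.1 ∈ C) with hD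
  have h1 : D.card = d * C.ncard := by
    rw [Finset.card_eq_sum_card_fiberwise (f := Prod.fst) (t := C.toFinset)
      (fun p hp => by simp only [Finset.mem_coe, hD, Finset.mem_filter] at hp; exact Set.mem_toFinset.2 hp.2.2)]
    rw [Finset.sum_congr rfl (g := fun _ => d) ?_, Finset.sum_const, smul_eq_mul,
      ← Set.ncard_eq_toFinset_card', mul_comm]
    intro v hv
    have hv' : v ∈ C := Set.mem_toFinset.1 hv
    have hfib : D.filter (fun p => p.1 = v) = {v} ×ˢ G.neighborFinset v := by
      ext ⟨p1, p2⟩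
      simp only [hD, Finset.mem_filter, Finset.mem_univ, true_and, Finset.mem_product,
        Finset.mem_singleton, SimpleGraph.mem_neighborFinset]
      constructor
      · rintro ⟨⟨hadj, hC⟩, rfl⟩; exact ⟨rfl, hadj⟩
      · rintro ⟨rfl, hadj⟩; exact ⟨⟨hadj, hv'⟩, rfl⟩
    rw [hfib, Finset.card_product, Finset.card_singleton, one_mul]
    exact hreg v
  have hsplit : (D.filter (fun p => p.2 ∈ C)).card + (D.filter (fun p => ¬ p.2 ∈ C)).card
      = D.card := Finset.card_filter_add_card_filter_not _
  have h3 : (D.filter (fun p => p.2 ∈ C)).card = 2 * (crs G C C).card := by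
    rw [Finset.card_eq_sum_card_fiberwise (f := fun p => s(p.1, p.2)) (t := crs G C C) ?_]
    · rw [Finset.sum_congr rfl (g := fun _ => 2) ?_, Finset.sum_const, smul_eq_mul, mul_comm]
      intro e he
      obtain ⟨he', a, b, rfl, ha, hb⟩ := (mem_crs G).1 he
      have hadj : G.Adj a b := (SimpleGraph.mem_edgeSet G).1 (SimpleGraph.mem_edgeFinset.1 he')
      have hab : a ≠ b := hadj.ne
      have hfib : (D.filter (fun p => p.2 ∈ C)).filter (fun p => s(p.1, p.2) = s(a, b))
          = {(a, b), (b, a)} := by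
        ext ⟨x, y⟩
        simp only [hD, Finset.mem_filter, Finset.mem_univ, true_and, Finset.mem_insert,
          Finset.mem_singleton, Prod.mk.injEq, Sym2.eq_iff]
        constructor
        · rintro ⟨⟨⟨hadj', hx⟩, hy⟩, (⟨rfl, rfl⟩ | ⟨rfl, rfl⟩)⟩
          · exact Or.inl ⟨rfl, rfl⟩
          · exact Or.inr ⟨rfl, rfl⟩
        · rintro (⟨rfl, rfl⟩ | ⟨rfl, rfl⟩)
          · exact ⟨⟨⟨hadj, ha⟩, hb⟩, Or.inl ⟨rfl, rfl⟩⟩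
          · exact ⟨⟨⟨hadj.symm, hb⟩, ha⟩, Or.inr ⟨rfl, rfl⟩⟩
      rw [hfib]
      exact Finset.card_pair (fun h => hab (congrArg Prod.fst h))
    · intro p hp
      simp only [Finset.mem_coe, hD, Finset.mem_filter, Finset.mem_univ, true_and] at hp
      exact (mem_crs G).2 ⟨SimpleGraph.mem_edgeFinset.2 hp.1.1, p.1, p.2, rfl, hp.1.2, hp.2⟩
  have h4 : (D.filter (fun p => ¬ p.2 ∈ C)).card = (crs G C Cᶜ).card := by
    rw [Finset.card_eq_sum_card_fiberwise (f := fun p => s(p.1, p.2)) (t := crs G C Cᶜ) ?_]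
    · rw [Finset.sum_congr rfl (g := fun _ => 1) ?_, Finset.sum_const, smul_eq_mul, mul_one]
      intro e he
      obtain ⟨he', a, b, rfl, ha, hb⟩ := (mem_crs G).1 he
      have hadj : G.Adj a b := (SimpleGraph.mem_edgeSet G).1 (SimpleGraph.mem_edgeFinset.1 he')
      have hfib : (D.filter (fun p => ¬ p.2 ∈ C)).filter (fun p => s(p.1, p.2) = s(a, b))
          = {(a, b)} := by
        ext ⟨x, y⟩
        simp only [hD, Finset.mem_filter, Finset.mem_univ, true_and,
          Finset.mem_singleton, Prod.mk.injEq, Sym2.eq_iff]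
        constructor
        · rintro ⟨⟨⟨hadj', hx⟩, hy⟩, (⟨rfl, rfl⟩ | ⟨rfl, rfl⟩)⟩
          · exact ⟨rfl, rfl⟩
          · exact absurd ha hy
        · rintro ⟨rfl, rfl⟩
          exact ⟨⟨⟨hadj, ha⟩, hb⟩, Or.inl ⟨rfl, rfl⟩⟩
      rw [hfib, Finset.card_singleton]
    · intro p hp
      simp only [Finset.mem_coe, hD, Finset.mem_filter, Finset.mem_univ, true_and] at hp
      exact (mem_crs G).2 ⟨SimpleGraph.mem_edgeFinset.2 hp.1.1, p.1, p.2, rfl, hp.1.2, hp.2⟩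
  omega

lemma ins_insert {a : V} {C : Finset V} (ha : a ∉ C) :
    (crs G ↑(insert a C) ↑(insert a C)).card
      = (crs G ↑C ↑C).card + (crs G {a} ↑C).card := by
  have hset : crs G ↑(insert a C) ↑(insert a C) = crs G ↑C ↑C ∪ crs G {a} ↑C := by
    ext e
    simp only [Finset.mem_union, mem_crs, Finset.coe_insert, Set.mem_insert_iff,
      Finset.mem_coe, Set.mem_singleton_iff]
    constructor
    · rintro ⟨he, x, y, rfl, hx, hy⟩
      have hxy : x ≠ y := ((SimpleGraph.mem_edgeSet G).1 (SimpleGraph.mem_edgeFinset.1 he)).ne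
      rcases hx with rfl | hx <;> rcases hy with rfl | hy
      · exact absurd rfl hxy
      · exact Or.inr ⟨he, x, y, rfl, rfl, hy⟩
      · exact Or.inr ⟨he, y, x, Sym2.eq_swap, rfl, hx⟩
      · exact Or.inl ⟨he, x, y, rfl, hx, hy⟩
    · rintro (⟨he, x, y, rfl, hx, hy⟩ | ⟨he, x, y, rfl, rfl, hy⟩)
      · exact ⟨he, x, y, rfl, Or.inr hx, Or.inr hy⟩
      · exact ⟨he, x, y, rfl, Or.inl rfl, Or.inr hy⟩
  have hdisj : Disjoint (crs G ↑C ↑C) (crs G {a} ↑C) := by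
    rw [Finset.disjoint_left]
    intro e h1 h2
    obtain ⟨he, x, y, rfl, hx, hy⟩ := (mem_crs G).1 h1
    obtain ⟨he', x', y', heq, hx', hy'⟩ := (mem_crs G).1 h2
    rw [Set.mem_singleton_iff] at hx'
    subst hx'
    rw [Sym2.eq_iff] at heq
    rcases heq with ⟨rfl, rfl⟩ | ⟨rfl, rfl⟩
    · exact ha hx
    · exact ha hy
  rw [hset, Finset.card_union_of_disjoint hdisj]

lemma maxcut (C : Finset V) :
    ∃ C1 C2 : Finset V, C1 ∪ C2 = C ∧ Disjoint C1 C2 ∧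
      (crs G ↑C ↑C).card ≤ 2 * (crs G ↑C1 ↑C2).card := by
  classical
  induction C using Finset.induction_on with
  | empty =>
    refine ⟨∅, ∅, by simp, disjoint_bot_left, ?_⟩
    have h0 : crs G ↑(∅ : Finset V) ↑(∅ : Finset V) = ∅ := by
      ext e; simp [mem_crs]
    rw [Finset.coe_empty] at h0
    simp [h0]
  | insert _ _ ha =>
    rename_i a C ih
    obtain ⟨C1, C2, hun, hdis, hle⟩ := ih
    have haC1 : a ∉ C1 := fun h => ha (hun ▸ Finset.mem_union_left _ h)
    have haC2 : a ∉ C2 := fun h => ha (hun ▸ Finset.mem_union_right _ h)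
    have hCcoe : (↑C : Set V) = ↑C1 ∪ ↑C2 := by rw [← Finset.coe_union, hun]
    have hB : (crs G {a} ↑C).card = (crs G {a} ↑C1).card + (crs G {a} ↑C2).card := by
      rw [hCcoe]
      exact crs_union_right G (Finset.disjoint_coe.2 hdis)
        (Set.disjoint_singleton_left.2 haC2)
    have hA := ins_insert G ha
    rcases le_total (crs G {a} ↑C1).card (crs G {a} ↑C2).card with h12 | h21
    · refine ⟨insert a C1, C2, ?_, ?_, ?_⟩
      · rw [Finset.insert_union, hun]
      · exact Finset.disjoint_insert_left.2 ⟨haC2, hdis⟩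
      · have hexp : (crs G ↑(insert a C1) ↑C2).card
            = (crs G {a} ↑C2).card + (crs G ↑C1 ↑C2).card := by
          rw [Finset.coe_insert, Set.insert_eq]
          exact crs_union_left G (Set.disjoint_singleton_left.2 haC1)
            (Finset.disjoint_coe.2 hdis.symm)
        omega
    · refine ⟨insert a C2, C1, ?_, ?_, ?_⟩
      · rw [Finset.insert_union, Finset.union_comm, hun]
      · exact Finset.disjoint_insert_left.2 ⟨haC1, hdis.symm⟩
      · have hexp : (crs G ↑(insert a C2) ↑C1).card
            = (crs G {a} ↑C1).card + (crs G ↑C2 ↑C1).card := by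
          rw [Finset.coe_insert, Set.insert_eq]
          exact crs_union_left G (Set.disjoint_singleton_left.2 haC2)
            (Finset.disjoint_coe.2 hdis)
        rw [crs_symm G ↑C2 ↑C1] at hexp
        omega

open scoped Classical in
lemma cutSize_eq (T : Set V) : cutSize G T = (crs G T Tᶜ).card := by
  rw [cutSize, crs]
  rw [← Set.ncard_coe_finset]
  congr 1
  ext e
  simp [SimpleGraph.mem_edgeFinset]

open scoped Classical in
lemma cutSizeIn_eq {S T : Set V} (hTS : T ⊆ S) :
    cutSizeIn G S T = (crs G T (S \ T)).card := by
  rw [cutSizeIn, crs]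
  rw [← Set.ncard_coe_finset]
  congr 1
  ext e
  simp only [Finset.coe_filter, SimpleGraph.mem_edgeFinset, Set.mem_setOf_eq, Set.mem_diff]
  constructor
  · rintro ⟨he, a, b, rfl, haS, hbS, haT, hbT⟩
    exact ⟨he, a, b, rfl, haT, hbS, hbT⟩
  · rintro ⟨he, a, b, rfl, haT, hbS, hbT⟩
    exact ⟨he, a, b, rfl, hTS haT, hbS, haT, hbT⟩

end Lemmas

/-- if every cut of a `d`-regular graph `G` on `n` vertices has at most
`ρ·nd/2` edges (`1/2 ≤ ρ < 1`), then for every vertex subset `S` and every partition of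
`S` into two parts, the number of edges of `G` inside `S` crossing the partition is at
most `ρ·(|S|+n)·d/4`. -/
theorem stmt15 (n d : ℕ) (V : Type*) [Fintype V] [DecidableEq V]
    (hcard : Fintype.card V = n)
    (G : SimpleGraph V) [DecidableRel G.Adj] (hreg : G.IsRegularOfDegree d)
    (ρ : ℝ) (hρ1 : 1 / 2 ≤ ρ) (hρ2 : ρ < 1)
    (hcut : ∀ T : Set V, (cutSize G T : ℝ) ≤ ρ * n * d / 2) :
    ∀ S T : Set V, T ⊆ S →
      (cutSizeIn G S T : ℝ) ≤ ρ * ((S.ncard : ℝ) + n) * d / 4 := by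
  classical
  intro S T hTS
  set A : Set V := T with hA
  set B : Set V := S \ T with hB
  set C : Set V := Sᶜ with hC
  have hCfin : C.Finite := Set.toFinite C
  obtain ⟨C1, C2, hun, hdis, hmc⟩ := maxcut G hCfin.toFinset
  set F1 : Set V := ↑C1 with hF1
  set F2 : Set V := ↑C2 with hF2
  have hCeq : F1 ∪ F2 = C := by
    rw [hF1, hF2, ← Finset.coe_union, hun, Set.Finite.coe_toFinset]
  rw [Set.Finite.coe_toFinset] at hmc
  -- basic inclusion/disjointness facts
  have hABS : A ∪ B = S := Set.union_diff_cancel hTS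
  have hAS : A ⊆ S := hTS
  have hBS : B ⊆ S := Set.diff_subset
  have hF1C : F1 ⊆ C := hCeq ▸ Set.subset_union_left
  have hF2C : F2 ⊆ C := hCeq ▸ Set.subset_union_right
  have hSC : Disjoint S C := disjoint_compl_right
  have hAB : Disjoint A B := disjoint_sdiff_self_right
  have hF12 : Disjoint F1 F2 := Finset.disjoint_coe.2 hdis
  have hAF1 : Disjoint A F1 := (hSC.mono hAS hF1C)
  have hAF2 : Disjoint A F2 := (hSC.mono hAS hF2C)
  have hBF1 : Disjoint B F1 := (hSC.mono hBS hF1C)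
  have hBF2 : Disjoint B F2 := (hSC.mono hBS hF2C)
  -- complements of the two test cuts
  have hcompl : ∀ F F' : Set V, F ∪ F' = C → Disjoint F F' → (A ∪ F)ᶜ = B ∪ F' := by
    intro F F' hFF hdFF
    ext x
    have hx2 : x ∈ B ↔ x ∈ S ∧ x ∉ A := Iff.rfl
    have hx1 : x ∈ A → x ∈ S := fun h => hAS h
    have hxC : x ∈ C ↔ x ∉ S := Iff.rfl
    have hFC : F ⊆ C := hFF ▸ Set.subset_union_left
    have hF'C : F' ⊆ C := hFF ▸ Set.subset_union_right
    have hx3 : x ∈ F → x ∉ S := fun h => (hFC h)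
    have hx4 : x ∈ F' → x ∉ S := fun h => (hF'C h)
    have hx5 : x ∉ S → (x ∈ F ∨ x ∈ F') := by
      intro h
      have hxC' : x ∈ F ∪ F' := by rw [hFF]; exact h
      exact hxC'
    have hx6 : x ∈ F → x ∉ F' := fun h1 h2 => hdFF.ne_of_mem h1 h2 rfl
    simp only [Set.mem_compl_iff, Set.mem_union]
    by_cases hxS : x ∈ S <;> tauto
  have hT1c : (A ∪ F1)ᶜ = B ∪ F2 := hcompl F1 F2 hCeq hF12
  have hT2c : (A ∪ F2)ᶜ = B ∪ F1 := hcompl F2 F1 (by rw [Set.union_comm]; exact hCeq) hF12.symm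
  -- expand the two cuts
  have h1 : cutSize G (A ∪ F1) = (crs G A B).card + (crs G A F2).card
      + ((crs G B F1).card + (crs G F1 F2).card) := by
    rw [cutSize_eq, hT1c,
      crs_union_left G hAF1 (Set.disjoint_union_left.2 ⟨hBF1, hF12.symm⟩),
      crs_union_right G hBF2 hAF2, crs_union_right G hBF2 hF12,
      crs_symm G F1 B]
  have h2 : cutSize G (A ∪ F2) = (crs G A B).card + (crs G A F1).card
      + ((crs G B F2).card + (crs G F1 F2).card) := by
    rw [cutSize_eq, hT2c,
      crs_union_left G hAF2 (Set.disjoint_union_left.2 ⟨hBF2, hF12⟩),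
      crs_union_right G hBF1 hAF1, crs_union_right G hBF1 hF12.symm,
      crs_symm G F2 B, crs_symm G F2 F1]
  -- recombine the pieces
  have e1 : (crs G A F1).card + (crs G A F2).card = (crs G A C).card := by
    rw [← hCeq]; exact (crs_union_right G hF12 hAF2).symm
  have e2 : (crs G B F1).card + (crs G B F2).card = (crs G B C).card := by
    rw [← hCeq]; exact (crs_union_right G hF12 hBF2).symm
  have e3 : (crs G A C).card + (crs G B C).card = (crs G C Cᶜ).card := by
    have hCB : Disjoint C B := (hSC.symm.mono_right hBS)
    have : (crs G (A ∪ B) C).card = (crs G A C).card + (crs G B C).card :=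
      crs_union_left G hAB hCB
    rw [← this, hABS, crs_symm]
    congr 1
    rw [hC, compl_compl]
  -- degree sum
  have hdeg := degree_sum_split G hreg C
  -- cut bounds
  have hc1 := hcut (A ∪ F1)
  have hc2 := hcut (A ∪ F2)
  rw [cutSizeIn_eq G hTS]
  -- cardinality bookkeeping
  have hSn : S.ncard + C.ncard = n := by
    rw [hC]
    rw [Set.ncard_add_ncard_compl, Nat.card_eq_fintype_card, hcard]
  -- pass to the reals
  have hsumR : (cutSize G (A ∪ F1) : ℝ) + (cutSize G (A ∪ F2) : ℝ)
      = 2 * ((crs G A B).card : ℝ) + ((crs G C Cᶜ).card : ℝ)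
        + 2 * ((crs G F1 F2).card : ℝ) := by
    rw [h1, h2]
    push_cast
    have e1' : ((crs G A F1).card : ℝ) + (crs G A F2).card = (crs G A C).card := by
      exact_mod_cast congrArg (Nat.cast : ℕ → ℝ) e1
    have e2' : ((crs G B F1).card : ℝ) + (crs G B F2).card = (crs G B C).card := by
      exact_mod_cast congrArg (Nat.cast : ℕ → ℝ) e2
    have e3' : ((crs G A C).card : ℝ) + (crs G B C).card = (crs G C Cᶜ).card := by
      exact_mod_cast congrArg (Nat.cast : ℕ → ℝ) e3
    linarith
  have hdegR : (d : ℝ) * (C.ncard : ℝ)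
      = 2 * ((crs G C C).card : ℝ) + ((crs G C Cᶜ).card : ℝ) := by
    exact_mod_cast congrArg (Nat.cast : ℕ → ℝ) hdeg
  have hmcR : ((crs G C C).card : ℝ) ≤ 2 * ((crs G F1 F2).card : ℝ) := by
    exact_mod_cast hmc
  have hSnR : (S.ncard : ℝ) + (C.ncard : ℝ) = (n : ℝ) := by
    exact_mod_cast congrArg (Nat.cast : ℕ → ℝ) hSn
  have hnR : (n : ℝ) = (S.ncard : ℝ) + (C.ncard : ℝ) := hSnR.symm
  rw [hnR] at hc1 hc2 ⊢
  have hd0 : (0 : ℝ) ≤ (d : ℝ) := Nat.cast_nonneg d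
  have hk0 : (0 : ℝ) ≤ (C.ncard : ℝ) := Nat.cast_nonneg _
  have hc0 : (0 : ℝ) ≤ ((crs G C Cᶜ).card : ℝ) := Nat.cast_nonneg _
  nlinarith [mul_nonneg (mul_nonneg (sub_nonneg.2 hρ2.le) hd0) hk0]
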